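/- The star on n vertices has exactly n - 1 + 2^{n-1} subtrees (connected induced subgraphs), and every tree on n vertices has at most n - 1 + 2^{n-1} connected induced subgraphs, with equality only for the star. -/

import Mathlib

open SimpleGraph

/-- The number of connected induced subgraphs of `G`, i.e. the number of nonempty
vertex subsets of `G` inducing a connected subgraph. -/
noncomputable def numConn {V : Type*} (G : SimpleGraph V) : ℕ :=
  Nat.card {s : Finset V // (G.induce (s : Set V)).Connected}

/-- The number of `k`-vertex connected induced subgraphs of `G`. -/
noncomputable def numConnK {V : Type*} (G : SimpleGraph V) (k : ℕ) : ℕ :=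
  Nat.card {s : Finset V // s.card = k ∧ (G.induce (s : Set V)).Connected}

/-- The number of connected induced subgraphs of `G` containing the vertex `v`. -/
noncomputable def numConnAt {V : Type*} (G : SimpleGraph V) (v : V) : ℕ :=
  Nat.card {s : Finset V // v ∈ s ∧ (G.induce (s : Set V)).Connected}

/-- The star graph on `Fin n`, with center `0`. -/
def starGraph' (n : ℕ) : SimpleGraph (Fin n) :=
  SimpleGraph.fromRel (fun i _ => (i : ℕ) = 0)

/-- The tadpole graph `G_{p,q}` (for `p ≥ 3`): the path `0 - 1 - ⋯ - (p+q-1)` together with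
the edge `{0, p-1}` closing a cycle of length `p`; the tail of length `q` hangs at `p-1`. -/
def tadpole (p q : ℕ) : SimpleGraph (Fin (p + q)) :=
  SimpleGraph.fromRel (fun i j => (i : ℕ) + 1 = j ∨ ((i : ℕ) = 0 ∧ (j : ℕ) = p - 1))

/-- The banner graph `B_n` (for `n ≥ 4`): a `4`-cycle `0-1-2-3-0` with `n - 4` pendant
vertices attached to vertex `0`. -/
def banner (n : ℕ) : SimpleGraph (Fin n) :=
  SimpleGraph.fromRel (fun i j =>
    ((i : ℕ) + 1 = j ∧ (j : ℕ) ≤ 3) ∨ ((i : ℕ) = 0 ∧ (j : ℕ) = 3) ∨ ((i : ℕ) = 0 ∧ 4 ≤ (j : ℕ)))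

/-- The graph `Q_n` (for `n > 2`): the star on `n` vertices with center `0`, plus an edge
joining the two leaves `1` and `2`. -/
def Qgraph (n : ℕ) : SimpleGraph (Fin n) :=
  SimpleGraph.fromRel (fun i j => (i : ℕ) = 0 ∨ ((i : ℕ) = 1 ∧ (j : ℕ) = 2))

open Finset
section aux
variable {V : Type*}

lemma aux_connected_singleton (G : SimpleGraph V) (a : V) :
    (G.induce (({a} : Finset V) : Set V)).Connected := by
  rw [Finset.coe_singleton, connected_iff]
  refine ⟨fun x y => ?_, ⟨⟨a, rfl⟩⟩⟩
  have : x = y := Subtype.ext (x.2.trans y.2.symm)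
  exact this ▸ Reachable.refl x

lemma aux_adj_of_reachable {W : Type*} {G : SimpleGraph W} {a b : W}
    (h : G.Reachable a b) (hne : a ≠ b) : ∃ c, G.Adj a c := by
  obtain ⟨w⟩ := h
  cases w with
  | nil => exact absurd rfl hne
  | cons h _ => exact ⟨_, h⟩

lemma aux_exists_adj (G : SimpleGraph V) {s : Finset V} (hc : (G.induce (s : Set V)).Connected)
    (hcard : 2 ≤ s.card) {x : V} (hx : x ∈ s) : ∃ y ∈ s, G.Adj x y := by
  obtain ⟨y, hy, hxy⟩ := Finset.exists_mem_ne hcard x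
  have hr := hc.preconnected ⟨x, by simpa using hx⟩ ⟨y, by simpa using hy⟩
  obtain ⟨c, hadj⟩ := aux_adj_of_reachable hr (by simp [Subtype.ext_iff]; exact fun h => hxy h.symm)
  exact ⟨c, by simpa using c.2, hadj⟩

lemma aux_walk_closed {W : Type*} {G : SimpleGraph W} (P : W → Prop)
    (hP : ∀ x y, G.Adj x y → P x → P y) {a b : W} (w : G.Walk a b) (ha : P a) : P b := by
  induction w with
  | nil => exact ha
  | cons h _ ih => exact ih (hP _ _ h ha)

lemma aux_no_triangle {T : SimpleGraph V} (hA : T.IsAcyclic) {a b c : V}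
    (h1 : T.Adj a b) (h2 : T.Adj b c) (h3 : T.Adj a c) : False := by
  rw [isAcyclic_iff_path_unique] at hA
  have hp2 : (Walk.cons h1 (Walk.cons h2 Walk.nil) : T.Walk a c).IsPath := by
    simp [Walk.isPath_def, h1.ne, h2.ne, h3.ne]
  have := hA (Path.singleton h3) ⟨_, hp2⟩
  have hlen := congrArg (fun p : T.Path a c => p.1.length) this
  simp [Path.singleton] at hlen

lemma numConn_eq [Fintype V] (G : SimpleGraph V)
    [DecidablePred fun s : Finset V => (G.induce (s : Set V)).Connected] :
    numConn G = (univ.filter fun s : Finset V => (G.induce (s : Set V)).Connected).card := by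
  rw [numConn, Nat.card_eq_fintype_card, Fintype.card_subtype]

end aux

section star

lemma star_adj {n : ℕ} {i j : Fin n} :
    (starGraph' n).Adj i j ↔ i ≠ j ∧ ((i : ℕ) = 0 ∨ (j : ℕ) = 0) := by
  simp [starGraph', fromRel_adj]

lemma fin_eq_zero {n : ℕ} [NeZero n] {a : Fin n} (h : (a : ℕ) = 0) : a = 0 :=
  Fin.ext (by simp [h])

lemma star_connected_iff {n : ℕ} [NeZero n] (s : Finset (Fin n)) :
    ((starGraph' n).induce (s : Set (Fin n))).Connected ↔ (0 : Fin n) ∈ s ∨ s.card = 1 := by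
  constructor
  · intro hc
    obtain ⟨x⟩ := hc.nonempty
    have hx : (x : Fin n) ∈ s := by simpa using x.2
    by_contra hcon
    push_neg at hcon
    obtain ⟨h0, h1⟩ := hcon
    have h2 : 2 ≤ s.card := by
      have : 1 ≤ s.card := Finset.card_pos.mpr ⟨_, hx⟩
      omega
    obtain ⟨y, hy, hadj⟩ := aux_exists_adj _ hc h2 hx
    rcases (star_adj.mp hadj).2 with h | h
    · exact h0 (by rwa [fin_eq_zero h] at hx)
    · exact h0 (by rwa [fin_eq_zero h] at hy)
  · rintro (h0 | h1)
    · rw [connected_iff]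
      refine ⟨?_, ⟨⟨0, by simpa using h0⟩⟩⟩
      have key : ∀ x : ((s : Set (Fin n))),
          ((starGraph' n).induce (s : Set (Fin n))).Reachable x ⟨0, by simpa using h0⟩ := by
        intro x
        by_cases hx0 : (x : Fin n) = 0
        · have : x = ⟨0, by simpa using h0⟩ := Subtype.ext hx0
          rw [this]
        · have hadj : ((starGraph' n).induce (s : Set (Fin n))).Adj x ⟨0, by simpa using h0⟩ := by
            simp only [comap_adj, Function.Embedding.coe_subtype]
            exact star_adj.mpr ⟨hx0, Or.inr (by simp)⟩
          exact hadj.reachable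
      exact fun x y => (key x).trans (key y).symm
    · obtain ⟨a, rfl⟩ := Finset.card_eq_one.mp h1
      exact aux_connected_singleton _ a

lemma card_filter_zero_mem (n : ℕ) [NeZero n] :
    ((univ : Finset (Finset (Fin n))).filter (fun s => (0:Fin n) ∈ s)).card = 2 ^ (n - 1) := by
  classical
  have hbij : ((univ : Finset (Finset (Fin n))).filter (fun s => (0:Fin n) ∈ s)).card
      = ((univ : Finset (Finset (Fin n))).filter (fun s => (0:Fin n) ∉ s)).card := by
    refine Finset.card_bij' (fun s _ => s.erase (0:Fin n)) (fun s _ => insert (0:Fin n) s)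
      ?_ ?_ ?_ ?_
    · intro a ha; simp
    · intro a ha; simp
    · intro a ha; simp only [mem_filter, mem_univ, true_and] at ha
      exact Finset.insert_erase ha
    · intro a ha; simp only [mem_filter, mem_univ, true_and] at ha
      exact Finset.erase_insert ha
  have hsum := Finset.card_filter_add_card_filter_not
    (s := (univ : Finset (Finset (Fin n)))) (p := fun s => (0:Fin n) ∈ s)
  have huniv : (univ : Finset (Finset (Fin n))).card = 2 ^ n := by
    simp [Finset.card_univ]
  have hn : 1 ≤ n := Nat.pos_of_ne_zero (NeZero.ne n)
  have h2n : 2 ^ n = 2 * 2 ^ (n - 1) := by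
    conv_lhs => rw [show n = (n - 1) + 1 by omega]
    ring
  omega

lemma card_filter_singleton (n : ℕ) [NeZero n] :
    ((univ : Finset (Finset (Fin n))).filter (fun s => (0:Fin n) ∉ s ∧ s.card = 1)).card
      = n - 1 := by
  classical
  have himg : (univ : Finset (Finset (Fin n))).filter (fun s => (0:Fin n) ∉ s ∧ s.card = 1)
      = (univ.erase (0:Fin n)).image (fun a => {a}) := by
    ext s
    simp only [mem_filter, mem_univ, true_and, mem_image, mem_erase, Finset.card_eq_one]
    constructor
    · rintro ⟨h0, a, rfl⟩
      refine ⟨a, ?_, rfl⟩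
      simp only [mem_erase, mem_univ, and_true]
      rintro rfl
      exact h0 (Finset.mem_singleton_self 0)
    · rintro ⟨a, ha, rfl⟩
      simp only [mem_erase, mem_univ, and_true] at ha
      exact ⟨fun h => ha (Finset.mem_singleton.mp h).symm, a, rfl⟩
  rw [himg, Finset.card_image_of_injective _ Finset.singleton_injective,
    Finset.card_erase_of_mem (mem_univ _), Finset.card_univ, Fintype.card_fin]

lemma star_count {n : ℕ} (hn : 1 ≤ n) : numConn (starGraph' n) = n - 1 + 2 ^ (n - 1) := by
  classical
  haveI : NeZero n := ⟨by omega⟩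
  rw [numConn_eq]
  have hpred : ∀ s : Finset (Fin n),
      ((starGraph' n).induce (s : Set (Fin n))).Connected
        ↔ ((0:Fin n) ∈ s ∨ ((0:Fin n) ∉ s ∧ s.card = 1)) := by
    intro s
    rw [star_connected_iff]
    by_cases h : (0:Fin n) ∈ s <;> tauto
  rw [Finset.filter_congr (fun s _ => hpred s), Finset.filter_or,
    Finset.card_union_of_disjoint, card_filter_zero_mem n, card_filter_singleton n]
  · omega
  · rw [Finset.disjoint_left]
    intro s h1 h2
    simp only [mem_filter] at h1 h2
    exact h2.2.1 h1.2

end star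
section tree

variable {V : Type} [Fintype V]

lemma tree_bound (T : SimpleGraph V) (hT : T.IsTree) {n : ℕ} (hn : 1 ≤ n)
    (hcard : Fintype.card V = n) :
    numConn T ≤ n - 1 + 2 ^ (n - 1) ∧
      (numConn T = n - 1 + 2 ^ (n - 1) →
        ∀ e1 ∈ T.edgeSet, ∀ e2 ∈ T.edgeSet, e1 ≠ e2 → ∃ x, x ∈ e1 ∧ x ∈ e2) := by
  classical
  set P : Finset V → Prop := fun s => (T.induce (s : Set V)).Connected with hP
  have hnum : numConn T = (univ.filter P).card := numConn_eq T
  set C1 := univ.filter (fun s : Finset V => P s ∧ s.card = 1) with hC1def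
  set C2 := univ.filter (fun s : Finset V => P s ∧ 2 ≤ s.card) with hC2def
  have hPnonempty : ∀ s : Finset V, P s → 1 ≤ s.card := by
    intro s hs
    obtain ⟨x⟩ := hs.nonempty
    exact Finset.card_pos.mpr ⟨x, by simpa using x.2⟩
  have hsplit : univ.filter P = C1 ∪ C2 := by
    ext s
    simp only [hC1def, hC2def, mem_filter, mem_union, mem_univ, true_and]
    constructor
    · intro hs
      have := hPnonempty s hs
      rcases Nat.lt_or_ge s.card 2 with h | h
      · exact Or.inl ⟨hs, by omega⟩
      · exact Or.inr ⟨hs, h⟩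
    · rintro (⟨hs, -⟩ | ⟨hs, -⟩) <;> exact hs
  have hdisj : Disjoint C1 C2 := by
    rw [Finset.disjoint_left]
    intro s h1 h2
    simp only [hC1def, hC2def, mem_filter] at h1 h2
    omega
  have hC1card : C1.card = n := by
    have himg : C1 = univ.image (fun a : V => {a}) := by
      ext s
      simp only [hC1def, mem_filter, mem_univ, true_and, mem_image, Finset.card_eq_one]
      constructor
      · rintro ⟨-, a, rfl⟩
        exact ⟨a, rfl⟩
      · rintro ⟨a, rfl⟩
        exact ⟨aux_connected_singleton T a, a, rfl⟩
    rw [himg, Finset.card_image_of_injective _ Finset.singleton_injective, Finset.card_univ,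
      hcard]
  set f : Finset V → Finset (Sym2 V) :=
    fun s => T.edgeFinset.filter (fun e => ∀ x ∈ e, x ∈ s) with hfdef
  have hrec : ∀ s ∈ C2, ∀ x : V, x ∈ s ↔ ∃ e ∈ f s, x ∈ e := by
    intro s hs x
    simp only [hC2def, mem_filter, mem_univ, true_and] at hs
    constructor
    · intro hx
      obtain ⟨y, hy, hadj⟩ := aux_exists_adj T hs.1 hs.2 hx
      refine ⟨s(x, y), ?_, by simp⟩
      simp only [hfdef, mem_filter, mem_edgeFinset]
      refine ⟨hadj, ?_⟩
      intro z hz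
      rcases Sym2.mem_iff.mp hz with rfl | rfl
      · exact hx
      · exact hy
    · rintro ⟨e, he, hx⟩
      simp only [hfdef, mem_filter] at he
      exact he.2 x hx
  have hmaps : ∀ s ∈ C2, f s ∈ T.edgeFinset.powerset.erase ∅ := by
    intro s hs
    have hs' := hs
    simp only [hC2def, mem_filter, mem_univ, true_and] at hs'
    rw [Finset.mem_erase, Finset.mem_powerset]
    constructor
    · obtain ⟨x, hx⟩ := Finset.card_pos.mp (by omega : 0 < s.card)
      obtain ⟨e, he, -⟩ := (hrec s hs x).mp hx
      exact Finset.ne_empty_of_mem he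
    · exact Finset.filter_subset _ _
  have hinj : ∀ s1 ∈ C2, ∀ s2 ∈ C2, f s1 = f s2 → s1 = s2 := by
    intro s1 h1 s2 h2 h
    ext x
    rw [hrec s1 h1, hrec s2 h2, h]
  have hedges : T.edgeFinset.card = n - 1 := by
    have := hT.card_edgeFinset
    omega
  have htarget : (T.edgeFinset.powerset.erase ∅).card = 2 ^ (n - 1) - 1 := by
    rw [Finset.card_erase_of_mem (Finset.empty_mem_powerset _), Finset.card_powerset, hedges]
  have hC2card : C2.card ≤ 2 ^ (n - 1) - 1 := by
    rw [← htarget]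
    exact Finset.card_le_card_of_injOn f hmaps
      (fun a ha b hb h => hinj a (Finset.mem_coe.mp ha) b (Finset.mem_coe.mp hb) h)
  have hcards : numConn T = C1.card + C2.card := by
    rw [hnum, hsplit, Finset.card_union_of_disjoint hdisj]
  have hpow : 1 ≤ 2 ^ (n - 1) := Nat.one_le_two_pow
  constructor
  · omega
  · intro heq e1 he1 e2 he2 hne
    by_contra hmeet
    push_neg at hmeet
    have hC2eq : C2.card = 2 ^ (n - 1) - 1 := by omega
    have himage : C2.image f = T.edgeFinset.powerset.erase ∅ := by
      apply Finset.eq_of_subset_of_card_le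
      · intro e he
        obtain ⟨s, hs, rfl⟩ := Finset.mem_image.mp he
        exact hmaps s hs
      · rw [htarget,
          Finset.card_image_of_injOn
            (fun a ha b hb h => hinj a (Finset.mem_coe.mp ha) b (Finset.mem_coe.mp hb) h),
          hC2eq]
    obtain ⟨⟨a, b⟩, rfl⟩ := Quot.exists_rep e1
    obtain ⟨⟨c, d⟩, rfl⟩ := Quot.exists_rep e2
    rw [mem_edgeSet] at he1 he2
    have hpair : ({s(a, b), s(c, d)} : Finset (Sym2 V)) ∈ T.edgeFinset.powerset.erase ∅ := by
      rw [Finset.mem_erase, Finset.mem_powerset]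
      refine ⟨by simp, ?_⟩
      intro e he
      rcases Finset.mem_insert.mp he with rfl | he
      · exact mem_edgeFinset.mpr he1
      · rw [Finset.mem_singleton] at he
        subst he
        exact mem_edgeFinset.mpr he2
    rw [← himage] at hpair
    obtain ⟨s, hsC2, hfs⟩ := Finset.mem_image.mp hpair
    have hsP : P s := by
      have := hsC2
      simp only [hC2def, mem_filter, mem_univ, true_and] at this
      exact this.1
    have ha_s : a ∈ s := (hrec s hsC2 a).mpr ⟨s(a, b), by rw [hfs]; simp, by simp⟩
    have hc_s : c ∈ s := (hrec s hsC2 c).mpr ⟨s(c, d), by rw [hfs]; simp, by simp⟩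
    have hclosed : ∀ x y : ((s : Set V)), (T.induce (s : Set V)).Adj x y →
        ((x : V) = a ∨ (x : V) = b) → ((y : V) = a ∨ (y : V) = b) := by
      intro x y hadj hx
      have hadj' : T.Adj (x : V) (y : V) := hadj
      have hmem : s((x : V), (y : V)) ∈ f s := by
        simp only [hfdef, mem_filter, mem_edgeFinset]
        refine ⟨hadj', ?_⟩
        intro z hz
        rcases Sym2.mem_iff.mp hz with rfl | rfl
        · exact Finset.mem_coe.mp x.2
        · exact Finset.mem_coe.mp y.2
      rw [hfs] at hmem
      rcases Finset.mem_insert.mp hmem with heq' | hmem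
      · rcases Sym2.eq_iff.mp heq' with ⟨-, rfl⟩ | ⟨-, rfl⟩
        · exact Or.inr rfl
        · exact Or.inl rfl
      · rw [Finset.mem_singleton] at hmem
        exfalso
        have hxcd : (x : V) ∈ s(c, d) := by rw [← hmem]; simp
        have hxab : (x : V) ∈ s(a, b) := by
          rcases hx with rfl | rfl <;> simp
        exact hmeet _ hxab hxcd
    have hreach := hsP.preconnected ⟨a, by simpa using ha_s⟩ ⟨c, by simpa using hc_s⟩
    obtain ⟨w⟩ := hreach
    have hc_ab : (c : V) = a ∨ (c : V) = b :=
      aux_walk_closed (fun x : ((s : Set V)) => (x : V) = a ∨ (x : V) = b)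
        hclosed w (Or.inl rfl)
    have hcab : c ∈ s(a, b) := by rcases hc_ab with rfl | rfl <;> simp
    exact hmeet c hcab (by simp)

lemma exists_center (T : SimpleGraph V) (hT : T.IsTree)
    (hmeet : ∀ e1 ∈ T.edgeSet, ∀ e2 ∈ T.edgeSet, e1 ≠ e2 → ∃ x, x ∈ e1 ∧ x ∈ e2) :
    ∃ v : V, ∀ e ∈ T.edgeSet, v ∈ e := by
  haveI : Nonempty V := hT.isConnected.nonempty
  by_cases hE : ∃ e, e ∈ T.edgeSet
  · obtain ⟨e0, he0⟩ := hE
    obtain ⟨⟨a, b⟩, rfl⟩ := Quot.exists_rep e0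
    rw [mem_edgeSet] at he0
    by_cases hA : ∀ e ∈ T.edgeSet, a ∈ e
    · exact ⟨a, hA⟩
    · push_neg at hA
      obtain ⟨e1, he1, ha1⟩ := hA
      have hne1 : s(a, b) ≠ e1 := fun h => ha1 (h ▸ (by simp : a ∈ s(a, b)))
      obtain ⟨x, hx0, hx1⟩ := hmeet _ ((T.mem_edgeSet).mpr he0) _ he1 hne1
      have hb1 : b ∈ e1 := by
        rcases Sym2.mem_iff.mp hx0 with rfl | rfl
        · exact absurd hx1 ha1
        · exact hx1
      refine ⟨b, ?_⟩
      intro e he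
      by_contra hbe
      have hne0 : e ≠ s(a, b) := fun h => hbe (h ▸ (by simp : b ∈ s(a, b)))
      obtain ⟨y, hy_e, hy0⟩ := hmeet _ he _ ((T.mem_edgeSet).mpr he0) hne0
      have ha_e : a ∈ e := by
        rcases Sym2.mem_iff.mp hy0 with rfl | rfl
        · exact hy_e
        · exact absurd hy_e hbe
      have hnee1 : e ≠ e1 := fun h => hbe (h ▸ hb1)
      obtain ⟨z, hz_e, hz1⟩ := hmeet _ he _ he1 hnee1
      have hza : z ≠ a := fun h => ha1 (h ▸ hz1)
      have hzb : z ≠ b := fun h => hbe (h ▸ hz_e)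
      have hadj_az : T.Adj a z := by
        rw [← T.mem_edgeSet]
        have : e = s(a, z) :=
          Sym2.eq_of_ne_mem (fun h => hza h.symm) ha_e hz_e (by simp) (by simp)
        rwa [← this]
      have hadj_bz : T.Adj b z := by
        rw [← T.mem_edgeSet]
        have : e1 = s(b, z) :=
          Sym2.eq_of_ne_mem (fun h => hzb h.symm) hb1 hz1 (by simp) (by simp)
        rwa [← this]
      exact aux_no_triangle hT.IsAcyclic he0 hadj_bz hadj_az
  · push_neg at hE
    exact ⟨Classical.arbitrary V, fun e he => absurd he (hE e)⟩

lemma adj_iff_center (T : SimpleGraph V) (hc : T.Connected)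
    {v : V} (hv : ∀ e ∈ T.edgeSet, v ∈ e) (a b : V) :
    T.Adj a b ↔ a ≠ b ∧ (a = v ∨ b = v) := by
  have key : ∀ x : V, x ≠ v → T.Adj x v := by
    intro x hx
    obtain ⟨w⟩ := hc.preconnected x v
    cases w with
    | nil => exact absurd rfl hx
    | cons h p =>
      have hmem := hv _ ((T.mem_edgeSet).mpr h)
      rcases Sym2.mem_iff.mp hmem with h1 | h2
      · exact absurd h1.symm hx
      · exact h2 ▸ h
  constructor
  · intro h
    refine ⟨h.ne, ?_⟩
    have hmem := hv _ ((T.mem_edgeSet).mpr h)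
    rcases Sym2.mem_iff.mp hmem with h1 | h2
    · exact Or.inl h1.symm
    · exact Or.inr h2.symm
  · rintro ⟨hne, rfl | rfl⟩
    · exact (key b (fun h => hne h.symm)).symm
    · exact key a hne

lemma iso_star {n : ℕ} (hn : 1 ≤ n) (hcard : Fintype.card V = n)
    (T : SimpleGraph V) {v : V} (hadj : ∀ a b : V, T.Adj a b ↔ a ≠ b ∧ (a = v ∨ b = v)) :
    Nonempty (T ≃g starGraph' n) := by
  haveI : NeZero n := ⟨by omega⟩
  let g : V ≃ Fin n := Fintype.equivFinOfCardEq hcard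
  let e : V ≃ Fin n := g.trans (Equiv.swap (g v) 0)
  have hev : e v = 0 := by simp [e, Equiv.swap_apply_left]
  refine ⟨⟨e, ?_⟩⟩
  intro x y
  rw [star_adj, hadj]
  constructor
  · rintro ⟨hne, h | h⟩
    · refine ⟨fun hh => hne (by rw [hh]), ?_⟩
      left
      have : e x = e v := by rw [hev]; exact fin_eq_zero h
      exact e.injective this
    · refine ⟨fun hh => hne (by rw [hh]), ?_⟩
      right
      have : e y = e v := by rw [hev]; exact fin_eq_zero h
      exact e.injective this
  · rintro ⟨hne, rfl | rfl⟩
    · exact ⟨fun h => hne (e.injective h), Or.inl (by simp [hev])⟩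
    · exact ⟨fun h => hne (e.injective h), Or.inr (by simp [hev])⟩

end tree

theorem stmt16 (n : ℕ) (hn : 1 ≤ n) :
    numConn (starGraph' n) = n - 1 + 2 ^ (n - 1) ∧
      ∀ {V : Type} [Fintype V] (T : SimpleGraph V), T.IsTree → Fintype.card V = n →
        numConn T ≤ n - 1 + 2 ^ (n - 1) ∧
          (numConn T = n - 1 + 2 ^ (n - 1) → Nonempty (T ≃g starGraph' n)) := by
  constructor
  · exact star_count hn
  · intro V _ T hT hcV
    obtain ⟨hb, hmeetimp⟩ := tree_bound T hT hn hcV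
    refine ⟨hb, fun heq => ?_⟩
    obtain ⟨v, hv⟩ := exists_center T hT (hmeetimp heq)
    exact iso_star hn hcV T (adj_iff_center T hT.isConnected hv)
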